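/- Under the stated assumptions, for all sufficiently large N one has (1/N)·#{n ≤ N : g_n ≤ 1/2} ≤ 2√ε. -/

import Mathlib

open Finset Filter

open scoped Classical in
/-- Let `(λ_n)` be strictly increasing with average gap `1` and Poisson pair correlations,
let `ε = 10⁻⁹`, and suppose `g n := λ_{n+1} − λ_n ≤ 3/2 + ε` for all `n ≥ 1`. Then for all
sufficiently large `N`, `(1/N)·#{n ≤ N : g n ≤ 1/2} ≤ 2√ε`. -/
theorem stmt_1 (lam : ℕ → ℝ) (g : ℕ → ℝ) (hgdef : ∀ n, g n = lam (n + 1) - lam n)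
    (hmono : ∀ n, 1 ≤ n → lam n < lam (n + 1))
    (havg : Tendsto (fun N : ℕ => (∑ n ∈ Finset.Icc 1 N, g n) / N) atTop (nhds 1))
    (hppc : ∀ I : Set ℝ, I.OrdConnected → Bornology.IsBounded I →
      Tendsto (fun N : ℕ =>
          (((Finset.Icc 1 N ×ˢ Finset.Icc 1 N).filter
            (fun p => p.1 ≠ p.2 ∧ lam p.2 - lam p.1 ∈ I)).card : ℝ) / N)
        atTop (nhds (MeasureTheory.volume I).toReal))
    (ε : ℝ) (hε : ε = 1 / 10 ^ 9)
    (hgap : ∀ n, 1 ≤ n → g n ≤ 3 / 2 + ε) :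
    ∀ᶠ N : ℕ in atTop,
      (((Finset.Icc 1 N).filter (fun n => g n ≤ 1 / 2)).card : ℝ) / N
        ≤ 2 * Real.sqrt ε := by
  subst hε
  classical
  -- Step 1: for each shell `j`, an eventual bound on the number of gaps in
  -- `(3/2 + ε - j·h, 3/2 + ε]` where `h = 1/2000000000`, coming from PPC.
  have shell : ∀ j ∈ Finset.Icc (1:ℕ) 1999890000, ∀ᶠ N : ℕ in atTop,
      (((Finset.Icc 1 N).filter
          (fun n => 3 / 2 + 1 / 10 ^ 9 - (j : ℝ) / 2000000000 < g n)).card : ℝ)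
        ≤ ((j : ℝ) / 2000000000 + 1 / 10 ^ 10) * N := by
    intro j _
    have hvol : (MeasureTheory.volume (Set.Ioc (3 / 2 + 1 / 10 ^ 9 - (j : ℝ) / 2000000000)
        (3 / 2 + 1 / 10 ^ 9))).toReal = (j : ℝ) / 2000000000 := by
      rw [Real.volume_Ioc,
        show (3 / 2 + 1 / 10 ^ 9) - (3 / 2 + 1 / 10 ^ 9 - (j : ℝ) / 2000000000)
          = (j : ℝ) / 2000000000 by ring,
        ENNReal.toReal_ofReal (by positivity)]
    have htd := hppc (Set.Ioc (3 / 2 + 1 / 10 ^ 9 - (j : ℝ) / 2000000000) (3 / 2 + 1 / 10 ^ 9))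
      Set.ordConnected_Ioc (Metric.isBounded_Ioc _ _)
    rw [hvol] at htd
    have hev1 := htd.eventually_lt_const
      (show (j : ℝ) / 2000000000 < (j : ℝ) / 2000000000 + 1 / 20000000000 by norm_num)
    filter_upwards [hev1, eventually_ge_atTop 20000000000] with N hc hNb
    have hN0 : (0 : ℝ) < N := by
      have h : (0 : ℕ) < N := by omega
      exact_mod_cast h
    have hNd : (1 : ℝ) ≤ 1 / 20000000000 * N := by
      have h : (20000000000 : ℝ) ≤ N := by exact_mod_cast hNb
      linarith
    have hinj : ((Finset.Icc 1 (N - 1)).filter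
        (fun n => 3 / 2 + 1 / 10 ^ 9 - (j : ℝ) / 2000000000 < g n)).card ≤
        ((Finset.Icc 1 N ×ˢ Finset.Icc 1 N).filter
          (fun p => p.1 ≠ p.2 ∧ lam p.2 - lam p.1 ∈
            Set.Ioc (3 / 2 + 1 / 10 ^ 9 - (j : ℝ) / 2000000000) (3 / 2 + 1 / 10 ^ 9))).card := by
      apply Finset.card_le_card_of_injOn (fun n => (n, n + 1))
      · intro n hn
        simp only [Finset.mem_coe, Finset.mem_filter, Finset.mem_Icc] at hn
        simp only [Finset.mem_coe, Finset.mem_filter, Finset.mem_product, Finset.mem_Icc]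
        have h1 : 1 ≤ n := hn.1.1
        have h2 : n ≤ N - 1 := hn.1.2
        refine ⟨⟨⟨h1, by omega⟩, by omega, by omega⟩, by omega, ?_⟩
        rw [← hgdef n]
        exact ⟨hn.2, hgap n h1⟩
      · intro a _ b _ hab
        simpa using congrArg Prod.fst hab
    have hstep : ((Finset.Icc 1 N).filter
        (fun n => 3 / 2 + 1 / 10 ^ 9 - (j : ℝ) / 2000000000 < g n)).card ≤
        ((Finset.Icc 1 (N - 1)).filter
          (fun n => 3 / 2 + 1 / 10 ^ 9 - (j : ℝ) / 2000000000 < g n)).card + 1 := by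
      have hsub : (Finset.Icc 1 N).filter
          (fun n => 3 / 2 + 1 / 10 ^ 9 - (j : ℝ) / 2000000000 < g n) ⊆
          insert N ((Finset.Icc 1 (N - 1)).filter
            (fun n => 3 / 2 + 1 / 10 ^ 9 - (j : ℝ) / 2000000000 < g n)) := by
        intro n hn
        simp only [Finset.mem_filter, Finset.mem_Icc] at hn
        rcases eq_or_ne n N with rfl | hne
        · exact Finset.mem_insert_self _ _
        · refine Finset.mem_insert_of_mem ?_
          simp only [Finset.mem_filter, Finset.mem_Icc]
          exact ⟨⟨hn.1.1, by omega⟩, hn.2⟩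
      calc ((Finset.Icc 1 N).filter
          (fun n => 3 / 2 + 1 / 10 ^ 9 - (j : ℝ) / 2000000000 < g n)).card
          ≤ (insert N ((Finset.Icc 1 (N - 1)).filter
            (fun n => 3 / 2 + 1 / 10 ^ 9 - (j : ℝ) / 2000000000 < g n))).card :=
            Finset.card_le_card hsub
        _ ≤ _ := Finset.card_insert_le _ _
    rw [div_lt_iff₀ hN0] at hc
    have h1R : (((Finset.Icc 1 N).filter
        (fun n => 3 / 2 + 1 / 10 ^ 9 - (j : ℝ) / 2000000000 < g n)).card : ℝ)
        ≤ (((Finset.Icc 1 (N - 1)).filter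
          (fun n => 3 / 2 + 1 / 10 ^ 9 - (j : ℝ) / 2000000000 < g n)).card : ℝ) + 1 := by
      exact_mod_cast hstep
    have h2R : (((Finset.Icc 1 (N - 1)).filter
        (fun n => 3 / 2 + 1 / 10 ^ 9 - (j : ℝ) / 2000000000 < g n)).card : ℝ)
        ≤ (((Finset.Icc 1 N ×ˢ Finset.Icc 1 N).filter
          (fun p => p.1 ≠ p.2 ∧ lam p.2 - lam p.1 ∈
            Set.Ioc (3 / 2 + 1 / 10 ^ 9 - (j : ℝ) / 2000000000) (3 / 2 + 1 / 10 ^ 9))).card : ℝ) := by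
      exact_mod_cast hinj
    linarith
  have shellAll := (Filter.eventually_all_finset (Finset.Icc (1:ℕ) 1999890000)).mpr shell
  -- Step 2: eventual lower bound on the sum of gaps, from the average.
  have hevS : ∀ᶠ N : ℕ in atTop,
      (1 - 1 / 10 ^ 10 : ℝ) * N ≤ ∑ n ∈ Finset.Icc 1 N, g n := by
    have h1 := havg.eventually_const_lt (show (1 - 1 / 10 ^ 10 : ℝ) < 1 by norm_num)
    filter_upwards [h1, eventually_ge_atTop 1] with N hlt hN1
    have hN0 : (0 : ℝ) < N := by
      have h : (0 : ℕ) < N := by omega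
      exact_mod_cast h
    rw [lt_div_iff₀ hN0] at hlt
    linarith
  -- Step 3: main argument.
  filter_upwards [hevS, shellAll, eventually_ge_atTop 1] with N hS hBig hN1
  have hN0 : (0 : ℝ) < N := by
    have h : (0 : ℕ) < N := by omega
    exact_mod_cast h
  set Sm := (Finset.Icc 1 N).filter (fun n => g n ≤ 1 / 2) with hSmdef
  set Md := (Finset.Icc 1 N).filter (fun n => ¬ g n ≤ 1 / 2) with hMddef
  have hcardIcc : (Finset.Icc 1 N).card = N := by
    rw [Nat.card_Icc]; omega
  have hsm : Sm.card + Md.card = N := by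
    rw [hSmdef, hMddef, Finset.card_filter_add_card_filter_not, hcardIcc]
  have hsmall : ∑ n ∈ Sm, g n ≤ (Sm.card : ℝ) * (1 / 2) := by
    have h := Finset.sum_le_card_nsmul Sm g (1 / 2)
      (fun n hn => (Finset.mem_filter.mp hn).2)
    simpa [nsmul_eq_mul] using h
  -- pointwise layer bound for medium gaps
  have hpoint : ∀ n ∈ Md, g n ≤ 3 / 2 + 1 / 10 ^ 9 - 1 / 2000000000 *
      (((Finset.Icc (1:ℕ) 1999890000).filter
        (fun j : ℕ => g n ≤ 3 / 2 + 1 / 10 ^ 9 - (j : ℝ) / 2000000000)).card : ℝ) := by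
    intro n hn
    have hn1 : 1 ≤ n := (Finset.mem_Icc.mp (Finset.mem_filter.mp hn).1).1
    have hgM : g n ≤ 3 / 2 + 1 / 10 ^ 9 := hgap n hn1
    have hsub : (Finset.Icc (1:ℕ) 1999890000).filter
        (fun j : ℕ => g n ≤ 3 / 2 + 1 / 10 ^ 9 - (j : ℝ) / 2000000000) ⊆
        Finset.Icc 1 (Nat.floor ((3 / 2 + 1 / 10 ^ 9 - g n) * 2000000000)) := by
      intro j hjf
      simp only [Finset.mem_filter, Finset.mem_Icc] at hjf ⊢
      refine ⟨hjf.1.1, Nat.le_floor ?_⟩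
      have h2 := hjf.2
      linarith
    have h1 : (((Finset.Icc (1:ℕ) 1999890000).filter
        (fun j : ℕ => g n ≤ 3 / 2 + 1 / 10 ^ 9 - (j : ℝ) / 2000000000)).card : ℝ)
        ≤ (Nat.floor ((3 / 2 + 1 / 10 ^ 9 - g n) * 2000000000) : ℝ) := by
      have hc := Finset.card_le_card hsub
      have he : (Finset.Icc 1 (Nat.floor ((3 / 2 + 1 / 10 ^ 9 - g n) * 2000000000))).card
          = Nat.floor ((3 / 2 + 1 / 10 ^ 9 - g n) * 2000000000) := by
        rw [Nat.card_Icc]; omega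
      rw [he] at hc
      exact_mod_cast hc
    have h2 : ((Nat.floor ((3 / 2 + 1 / 10 ^ 9 - g n) * 2000000000)) : ℝ)
        ≤ (3 / 2 + 1 / 10 ^ 9 - g n) * 2000000000 :=
      Nat.floor_le (by nlinarith)
    linarith
  have hmed : ∑ n ∈ Md, g n ≤ (Md.card : ℝ) * (3 / 2 + 1 / 10 ^ 9) - 1 / 2000000000 *
      ∑ n ∈ Md, (((Finset.Icc (1:ℕ) 1999890000).filter
        (fun j : ℕ => g n ≤ 3 / 2 + 1 / 10 ^ 9 - (j : ℝ) / 2000000000)).card : ℝ) := by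
    have h := Finset.sum_le_sum hpoint
    calc ∑ n ∈ Md, g n
        ≤ ∑ n ∈ Md, (3 / 2 + 1 / 10 ^ 9 - 1 / 2000000000 *
          (((Finset.Icc (1:ℕ) 1999890000).filter
            (fun j : ℕ => g n ≤ 3 / 2 + 1 / 10 ^ 9 - (j : ℝ) / 2000000000)).card : ℝ)) := h
      _ = (Md.card : ℝ) * (3 / 2 + 1 / 10 ^ 9) - 1 / 2000000000 *
          ∑ n ∈ Md, (((Finset.Icc (1:ℕ) 1999890000).filter
            (fun j : ℕ => g n ≤ 3 / 2 + 1 / 10 ^ 9 - (j : ℝ) / 2000000000)).card : ℝ) := by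
        rw [Finset.sum_sub_distrib, Finset.sum_const, nsmul_eq_mul, ← Finset.mul_sum]
  -- swap the double counting
  have hswap : ∑ n ∈ Md, (((Finset.Icc (1:ℕ) 1999890000).filter
      (fun j : ℕ => g n ≤ 3 / 2 + 1 / 10 ^ 9 - (j : ℝ) / 2000000000)).card : ℝ)
      = ∑ j ∈ Finset.Icc (1:ℕ) 1999890000,
        ((Md.filter (fun n => g n ≤ 3 / 2 + 1 / 10 ^ 9 - (j : ℝ) / 2000000000)).card : ℝ) := by
    simp_rw [Finset.natCast_card_filter]
    exact Finset.sum_comm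
  -- each shell-count from below, via the big-gap bound
  have hcover : ∀ j ∈ Finset.Icc (1:ℕ) 1999890000,
      (Md.card : ℝ) - ((j : ℝ) / 2000000000 + 1 / 10 ^ 10) * N
        ≤ ((Md.filter (fun n => g n ≤ 3 / 2 + 1 / 10 ^ 9 - (j : ℝ) / 2000000000)).card : ℝ) := by
    intro j hj
    have hsub : Md ⊆ (Md.filter (fun n => g n ≤ 3 / 2 + 1 / 10 ^ 9 - (j : ℝ) / 2000000000))
        ∪ ((Finset.Icc 1 N).filter
            (fun n => 3 / 2 + 1 / 10 ^ 9 - (j : ℝ) / 2000000000 < g n)) := by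
      intro n hn
      by_cases hgn : g n ≤ 3 / 2 + 1 / 10 ^ 9 - (j : ℝ) / 2000000000
      · exact Finset.mem_union_left _ (Finset.mem_filter.mpr ⟨hn, hgn⟩)
      · exact Finset.mem_union_right _
          (Finset.mem_filter.mpr ⟨(Finset.mem_filter.mp hn).1, lt_of_not_ge hgn⟩)
    have h1 : Md.card ≤
        (Md.filter (fun n => g n ≤ 3 / 2 + 1 / 10 ^ 9 - (j : ℝ) / 2000000000)).card
        + ((Finset.Icc 1 N).filter
            (fun n => 3 / 2 + 1 / 10 ^ 9 - (j : ℝ) / 2000000000 < g n)).card :=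
      le_trans (Finset.card_le_card hsub) (Finset.card_union_le _ _)
    have h1R : (Md.card : ℝ) ≤
        ((Md.filter (fun n => g n ≤ 3 / 2 + 1 / 10 ^ 9 - (j : ℝ) / 2000000000)).card : ℝ)
        + (((Finset.Icc 1 N).filter
            (fun n => 3 / 2 + 1 / 10 ^ 9 - (j : ℝ) / 2000000000 < g n)).card : ℝ) := by
      exact_mod_cast h1
    have h2 := hBig j hj
    linarith
  -- Gauss sum
  have hgauss : (∑ j ∈ Finset.Icc (1:ℕ) 1999890000, (j : ℝ)) = 1999890000 * 1999890001 / 2 := by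
    have key : ∀ n : ℕ, (∑ j ∈ Finset.Ioc (0:ℕ) n, (j : ℝ)) = n * (n + 1) / 2 := by
      intro n
      induction n with
      | zero => simp
      | succ k ih =>
        rw [Finset.sum_Ioc_succ_top (Nat.zero_le k), ih]
        push_cast
        ring
    have h2 : Finset.Icc (1:ℕ) 1999890000 = Finset.Ioc (0:ℕ) 1999890000 :=
      Finset.Icc_add_one_left_eq_Ioc 0 1999890000
    rw [h2, key]
    norm_num
  have hsum1 : ∑ j ∈ Finset.Icc (1:ℕ) 1999890000,
      ((Md.card : ℝ) - ((j : ℝ) / 2000000000 + 1 / 10 ^ 10) * N)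
      ≤ ∑ n ∈ Md, (((Finset.Icc (1:ℕ) 1999890000).filter
        (fun j : ℕ => g n ≤ 3 / 2 + 1 / 10 ^ 9 - (j : ℝ) / 2000000000)).card : ℝ) := by
    rw [hswap]
    exact Finset.sum_le_sum hcover
  have hcardJ : ((Finset.Icc (1:ℕ) 1999890000).card : ℝ) = 1999890000 := by
    rw [Nat.card_Icc]
    norm_num
  have hsum2 : ∑ j ∈ Finset.Icc (1:ℕ) 1999890000,
      ((Md.card : ℝ) - ((j : ℝ) / 2000000000 + 1 / 10 ^ 10) * N)
      = 1999890000 * (Md.card : ℝ)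
        - (1999890000 * 1999890001 / 2 / 2000000000 + 1999890000 / 10 ^ 10) * N := by
    rw [Finset.sum_sub_distrib, Finset.sum_const, nsmul_eq_mul, hcardJ]
    have h4 : ∑ j ∈ Finset.Icc (1:ℕ) 1999890000, (((j : ℝ) / 2000000000 + 1 / 10 ^ 10) * (N:ℝ))
        = (1999890000 * 1999890001 / 2 / 2000000000 + 1999890000 / 10 ^ 10) * (N:ℝ) := by
      rw [← Finset.sum_mul]
      congr 1
      rw [Finset.sum_add_distrib, Finset.sum_const, nsmul_eq_mul, hcardJ, ← Finset.sum_div,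
        hgauss]
      ring
    rw [h4]
  have hsplit : ∑ n ∈ Finset.Icc 1 N, g n = ∑ n ∈ Sm, g n + ∑ n ∈ Md, g n := by
    rw [hSmdef, hMddef]
    exact (Finset.sum_filter_add_sum_filter_not _ _ _).symm
  have hsmR : (Sm.card : ℝ) + (Md.card : ℝ) = (N : ℝ) := by exact_mod_cast hsm
  have hs0 : (0 : ℝ) ≤ (Sm.card : ℝ) := Nat.cast_nonneg _
  have hfinal : (Sm.card : ℝ) ≤ 539 / 10 ^ 7 * N := by
    have hkey := hsum1
    rw [hsum2] at hkey
    linarith [hS, hsplit, hsmall, hmed, hkey, hsmR, hs0, hN0]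
  have hsqrt : (316 / 10 ^ 7 : ℝ) ≤ Real.sqrt (1 / 10 ^ 9) := by
    have h1 : ((316 / 10 ^ 7 : ℝ)) = Real.sqrt ((316 / 10 ^ 7) ^ 2) :=
      (Real.sqrt_sq (by norm_num)).symm
    rw [h1]
    exact Real.sqrt_le_sqrt (by norm_num)
  rw [div_le_iff₀ hN0]
  have hmul : (632 / 10 ^ 7 : ℝ) * N ≤ 2 * Real.sqrt (1 / 10 ^ 9) * N := by
    apply mul_le_mul_of_nonneg_right _ hN0.le
    linarith
  linarith
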